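/- For Case B, L_g L_f² h(x) = T_sup·√(p_L + α·p_sup − p_lp)·ω²·K, which is nonzero under the conditions T_sup ≠ 0, ω ≠ 0, K ≠ 0, p_L + α·p_sup − p_lp > 0, so the relative degree in Case B is also 3. -/
import Mathlib

open ContinuousLinearMap


/-- For Case B, with
L_f² h(x) = (1/2)·T_sup·(α·T_sup + T_L)·x_v² + T_sup·v·r
(r = √(p_L + α·p_sup − p_lp)) and g = (0,0,ω²K,0),
L_g L_f² h(x) = T_sup·r·ω²·K, nonzero when T_sup ≠ 0, ω ≠ 0, K ≠ 0, r² > 0;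
with L_g h = 0 and L_g L_f h = 0 the relative degree in Case B is also 3. -/
theorem stmt18 (T_L T_sup D ω K α p_lp : ℝ)
    (h : (Fin 4 → ℝ) → ℝ) (hh : h = fun x => x 1)
    (Lfh : (Fin 4 → ℝ) → ℝ)
    (hLfh : Lfh = fun x => T_sup * x 3 * Real.sqrt (x 0 + α * x 1 - p_lp))
    (Lf2h : (Fin 4 → ℝ) → ℝ)
    (hLf2h : Lf2h = fun x => (1/2) * T_sup * (α * T_sup + T_L) * (x 3)^2
          + T_sup * x 2 * Real.sqrt (x 0 + α * x 1 - p_lp))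
    (g : Fin 4 → ℝ) (hg : g = ![0, 0, ω^2 * K, 0]) :
    ∀ x : Fin 4 → ℝ, x 0 + α * x 1 - p_lp > 0 →
      fderiv ℝ Lf2h x g = T_sup * Real.sqrt (x 0 + α * x 1 - p_lp) * ω^2 * K ∧
      (T_sup ≠ 0 → ω ≠ 0 → K ≠ 0 →
        fderiv ℝ h x g = 0 ∧ fderiv ℝ Lfh x g = 0 ∧ fderiv ℝ Lf2h x g ≠ 0) := by
  intro x hx
  set P : Fin 4 → ((Fin 4 → ℝ) →L[ℝ] ℝ) := fun i => ContinuousLinearMap.proj i with hP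
  have hpi : ∀ i : Fin 4, HasFDerivAt (fun y : Fin 4 → ℝ => y i) (P i) x :=
    fun i => (P i).hasFDerivAt
  have hune : x 0 + α * x 1 - p_lp ≠ 0 := ne_of_gt hx
  have hu : HasFDerivAt (fun y : Fin 4 → ℝ => y 0 + α * y 1 - p_lp)
      (P 0 + α • P 1) x := (((hpi 0).add ((hpi 1).const_mul α)).sub_const p_lp)
  have hs : HasFDerivAt (fun y : Fin 4 → ℝ => Real.sqrt (y 0 + α * y 1 - p_lp))
      ((1 / (2 * Real.sqrt (x 0 + α * x 1 - p_lp))) • (P 0 + α • P 1)) x :=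
    (Real.hasDerivAt_sqrt hune).comp_hasFDerivAt x hu
  -- h
  have h1 : fderiv ℝ h x g = 0 := by
    rw [hh, (hpi 1).fderiv, hg]
    simp [hP]
  -- Lfh
  have h2 : fderiv ℝ Lfh x g = 0 := by
    have hd : HasFDerivAt Lfh
        ((T_sup * x 3) • ((1 / (2 * Real.sqrt (x 0 + α * x 1 - p_lp))) • (P 0 + α • P 1))
          + Real.sqrt (x 0 + α * x 1 - p_lp) • (T_sup • P 3)) x := by
      rw [hLfh]
      exact ((hpi 3).const_mul T_sup).mul hs
    rw [hd.fderiv, hg]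
    simp [hP]
  -- Lf2h
  have h3 : fderiv ℝ Lf2h x g = T_sup * Real.sqrt (x 0 + α * x 1 - p_lp) * ω^2 * K := by
    have hsq : HasFDerivAt (fun y : Fin 4 → ℝ => (1/2) * T_sup * (α * T_sup + T_L) * (y 3)^2)
        (((1/2) * T_sup * (α * T_sup + T_L)) • (x 3 • P 3 + x 3 • P 3)) x := by
      simp only [pow_two]
      exact ((hpi 3).mul (hpi 3)).const_mul ((1/2) * T_sup * (α * T_sup + T_L))
    have hd : HasFDerivAt Lf2h
        ((((1/2) * T_sup * (α * T_sup + T_L)) • (x 3 • P 3 + x 3 • P 3))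
          + ((T_sup * x 2) • ((1 / (2 * Real.sqrt (x 0 + α * x 1 - p_lp))) • (P 0 + α • P 1))
            + Real.sqrt (x 0 + α * x 1 - p_lp) • (T_sup • P 2))) x := by
      rw [hLf2h]
      exact hsq.add (((hpi 2).const_mul T_sup).mul hs)
    rw [hd.fderiv, hg]
    simp [hP]
    ring
  refine ⟨h3, fun hT hω hK => ⟨h1, h2, ?_⟩⟩
  rw [h3]
  have : Real.sqrt (x 0 + α * x 1 - p_lp) ≠ 0 := by positivity
  positivity
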